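/- Let α > 1/2 and 0 < β < α - 1/2 with β ≤ 1. There exists a constant C_{α,β} such that for all measurable functions g, f : 𝕋^{d-1} → 𝕋^1 and every trigonometric polynomial φ on 𝕋^d, ∫_{𝕋^{d-1}} |φ(g(k̂), k̂) - φ(f(k̂), k̂)|² dk̂ ≤ C_{α,β} · (sup_{k̂} |g(k̂) - f(k̂)|)^{2β} · ‖φ‖_α². -/

import Mathlib

open Complex Real MeasureTheory

lemma norm_expI_sub_one_le (θ : ℝ) : ‖Complex.exp (θ * I) - 1‖ ≤ |θ| := by
  have hsq : ‖Complex.exp (θ * I) - 1‖ ^ 2 ≤ θ ^ 2 := by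
    rw [Complex.sq_norm, Complex.normSq_apply]
    simp only [Complex.sub_re, Complex.sub_im, Complex.one_re, Complex.one_im,
      Complex.exp_ofReal_mul_I_re, Complex.exp_ofReal_mul_I_im]
    have h3 : |Real.sin (θ / 2)| ≤ |θ / 2| := Real.abs_sin_le_abs
    have h4 : Real.sin (θ / 2) ^ 2 ≤ (θ / 2) ^ 2 := by
      nlinarith [_root_.sq_abs (Real.sin (θ/2)), _root_.sq_abs (θ/2), abs_nonneg (Real.sin (θ/2)),
        abs_nonneg (θ/2)]
    have h5 : Real.cos θ = 1 - 2 * Real.sin (θ / 2) ^ 2 := by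
      have h := Real.cos_two_mul (θ / 2)
      rw [show 2 * (θ / 2) = θ by ring] at h
      have := Real.sin_sq_add_cos_sq (θ / 2); nlinarith
    nlinarith [Real.sin_sq_add_cos_sq θ]
  have := Real.sqrt_le_sqrt hsq
  rwa [Real.sqrt_sq_eq_abs, Real.sqrt_sq_eq_abs, abs_norm] at this

lemma norm_expI_sub_expI_le (a b : ℝ) : ‖Complex.exp (I * a) - Complex.exp (I * b)‖ ≤ |a - b| := by
  have : Complex.exp (I * a) - Complex.exp (I * b)
      = Complex.exp (I * b) * (Complex.exp (((a - b : ℝ) : ℂ) * I) - 1) := by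
    rw [mul_sub, ← Complex.exp_add, mul_one]
    push_cast; ring_nf
  rw [this, norm_mul]
  have h2 : ‖Complex.exp (I * b)‖ = 1 := by
    rw [Complex.norm_exp]; simp
  rw [h2, one_mul]
  exact norm_expI_sub_one_le _

lemma integral_expI (k : ℤ) :
    (∫ t in Set.Ioc (-π) π, Complex.exp (I * k * t)) =
      if k = 0 then ((2 * π : ℝ) : ℂ) else 0 := by
  have hle : (-π : ℝ) ≤ π := by linarith [Real.pi_pos]
  rw [← intervalIntegral.integral_of_le hle]
  by_cases hk : k = 0
  · simp [hk]
    ring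
  · have hc : (I * (k : ℂ)) ≠ 0 := by
      simp [Complex.I_ne_zero, hk]
    rw [if_neg hk]
    have h := integral_exp_mul_complex (a := (-π : ℝ)) (b := (π : ℝ)) hc
    simp only [mul_assoc] at h ⊢
    rw [h, div_eq_zero_iff]
    left
    rw [sub_eq_zero]
    rw [show (I * ((k:ℂ) * ((-π : ℝ) : ℂ))) = I * ((k:ℂ) * (π:ℝ)) - (k : ℂ) * (2 * π * I) by
      push_cast; ring, Complex.exp_sub, Complex.exp_int_mul_two_pi_mul_I]
    simp

lemma summable_int_weight {γ : ℝ} (hγ : 1 / 2 < γ) :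
    Summable (fun n : ℤ => (1 + (n : ℝ) ^ 2) ^ (-γ)) := by
  have h1 : Summable (fun n : ℤ => |(n : ℝ)| ^ (-(2 * γ))) :=
    Real.summable_abs_int_rpow (by linarith)
  have h2 : Summable (fun n : ℤ => if n = 0 then (1 : ℝ) else 0) :=
    summable_of_ne_finset_zero (s := {0}) (fun n hn => if_neg (by simpa using hn))
  refine Summable.of_nonneg_of_le (fun n => Real.rpow_nonneg (by positivity) _)
    (fun n => ?_) (h1.add h2)
  by_cases hn : n = 0
  · subst hn; simp; exact Real.rpow_nonneg le_rfl _
  · have hn1 : (1 : ℝ) ≤ |(n : ℝ)| := by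
      rw [← Int.cast_abs]; exact_mod_cast Int.one_le_abs (by simpa using hn)
    have hpos : (0 : ℝ) < (n : ℝ) ^ 2 := by positivity
    have key : (1 + (n : ℝ) ^ 2) ^ (-γ) ≤ ((n : ℝ) ^ 2) ^ (-γ) :=
      Real.rpow_le_rpow_of_nonpos hpos (by linarith) (by linarith)
    have : ((n : ℝ) ^ 2) ^ (-γ) = |(n : ℝ)| ^ (-(2 * γ)) := by
      rw [← _root_.sq_abs, ← Real.rpow_natCast |(n:ℝ)| 2, ← Real.rpow_mul (abs_nonneg _)]
      norm_num
    rw [if_neg hn]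
    simpa [this] using key

noncomputable def box (d : ℕ) : Set (Fin d → ℝ) := Set.pi Set.univ fun _ => Set.Ioc (-π) π

lemma measurableSet_box (d : ℕ) : MeasurableSet (box d) :=
  MeasurableSet.univ_pi fun _ => measurableSet_Ioc

lemma volume_box (d : ℕ) : MeasureTheory.volume (box d) = ENNReal.ofReal (2 * π) ^ d := by
  rw [box, MeasureTheory.volume_pi_pi]
  simp only [Real.volume_Ioc, Finset.prod_const, Finset.card_univ, Fintype.card_fin]
  congr 1
  ring_nf

lemma integrableOn_box_of_bounded {d : ℕ} {E : Type*} [NormedAddCommGroup E]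
    {h : (Fin d → ℝ) → E} (hm : AEStronglyMeasurable h (volume.restrict (box d)))
    {C : ℝ} (hb : ∀ y, ‖h y‖ ≤ C) : IntegrableOn h (box d) := by
  have hfin : MeasureTheory.volume (box d) < ⊤ := by
    rw [volume_box]; exact ENNReal.pow_lt_top ENNReal.ofReal_lt_top
  exact Integrable.mono' (integrableOn_const hfin.ne) hm (Filter.Eventually.of_forall hb)

lemma integral_box_prod {d : ℕ} (f : Fin d → ℝ → ℂ) :
    ∫ y in box d, ∏ i, f i (y i) = ∏ i, ∫ t in Set.Ioc (-π) π, f i t := by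
  rw [← MeasureTheory.integral_indicator (measurableSet_box d)]
  have h : Set.indicator (box d) (fun y => ∏ i, f i (y i)) =
      fun y => ∏ i, Set.indicator (Set.Ioc (-π) π) (f i) (y i) := by
    funext y
    by_cases hy : y ∈ box d
    · rw [Set.indicator_of_mem hy]
      have h2 := (Set.mem_univ_pi).1 hy
      exact (Finset.prod_congr rfl fun i _ => (Set.indicator_of_mem (h2 i) _).symm)
    · rw [Set.indicator_of_notMem hy]
      have h2 : ¬ ∀ i, y i ∈ Set.Ioc (-π) π := fun h' => hy ((Set.mem_univ_pi).2 h')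
      push_neg at h2
      obtain ⟨i, hi⟩ := h2
      exact (Finset.prod_eq_zero (Finset.mem_univ i) (Set.indicator_of_notMem hi _)).symm
  rw [h]
  refine (MeasureTheory.integral_fintype_prod_eq_prod
    (f := fun i t => Set.indicator (Set.Ioc (-π) π) (f i) t)
    (μ := fun _ => (volume : Measure ℝ))).trans ?_
  exact Finset.prod_congr rfl fun i _ =>
    (congrArg _ rfl).trans (MeasureTheory.integral_indicator measurableSet_Ioc)

noncomputable def eC {d : ℕ} (m : Fin d → ℤ) (y : Fin d → ℝ) : ℂ :=
  Complex.exp (Complex.I * ((∑ i, (m i : ℝ) * y i : ℝ) : ℂ))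

lemma continuous_eC {d : ℕ} (m : Fin d → ℤ) : Continuous (eC m) := by
  unfold eC
  fun_prop

lemma norm_eC {d : ℕ} (m : Fin d → ℤ) (y : Fin d → ℝ) : ‖eC m y‖ = 1 := by
  rw [eC, Complex.norm_exp]
  simp

lemma eC_mul_conj {d : ℕ} (m m' : Fin d → ℤ) (y : Fin d → ℝ) :
    eC m y * (starRingEnd ℂ) (eC m' y) = eC (m - m') y := by
  rw [eC, eC, eC, ← Complex.exp_conj, ← Complex.exp_add]
  congr 1
  simp only [map_mul, Complex.conj_I, Complex.conj_ofReal]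
  rw [show ∀ a b : ℂ, I * a + -I * b = I * (a - b) by intros; ring]
  congr 1
  rw [← Complex.ofReal_sub]
  congr 1
  rw [← Finset.sum_sub_distrib]
  refine Finset.sum_congr rfl fun i _ => ?_
  simp [sub_mul]

lemma integral_box_eC {d : ℕ} (k : Fin d → ℤ) :
    ∫ y in box d, eC k y = if k = 0 then ((2 * π : ℝ) : ℂ) ^ d else 0 := by
  have hy : ∀ y : Fin d → ℝ, eC k y = ∏ i, Complex.exp (I * (k i : ℂ) * ((y i : ℝ) : ℂ)) := by
    intro y
    rw [eC, ← Complex.exp_sum]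
    congr 1
    rw [Complex.ofReal_sum, Finset.mul_sum]
    refine Finset.sum_congr rfl fun i _ => ?_
    push_cast
    ring
  simp_rw [hy]
  rw [integral_box_prod (f := fun i t => Complex.exp (I * (k i : ℂ) * (t : ℂ)))]
  have : ∀ i, (∫ t in Set.Ioc (-π) π, Complex.exp (I * (k i : ℂ) * (t : ℂ)))
      = if k i = 0 then ((2 * π : ℝ) : ℂ) else 0 := fun i => integral_expI (k i)
  simp_rw [this]
  by_cases hk : k = 0
  · subst hk; simp
  · rw [if_neg hk]
    obtain ⟨i, hi⟩ := Function.ne_iff.1 hk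
    exact Finset.prod_eq_zero (Finset.mem_univ i) (if_neg (by simpa using hi))

lemma parseval {d : ℕ} (S : Finset (Fin d → ℤ)) (a : (Fin d → ℤ) → ℂ) :
    ∫ y in box d, ‖∑ m ∈ S, a m * eC m y‖ ^ 2 = (2 * π) ^ d * ∑ m ∈ S, ‖a m‖ ^ 2 := by
  set F : (Fin d → ℝ) → ℂ := fun y => ∑ m ∈ S, a m * eC m y with hF
  have hFcont : Continuous F := by
    apply continuous_finset_sum
    exact fun m _ => continuous_const.mul (continuous_eC m)
  have hexp : ∀ y, F y * (starRingEnd ℂ) (F y)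
      = ∑ m ∈ S, ∑ m' ∈ S, (a m * (starRingEnd ℂ) (a m')) * eC (m - m') y := by
    intro y
    rw [hF]
    simp only [map_sum, map_mul, Finset.sum_mul_sum]
    refine Finset.sum_congr rfl fun m _ => Finset.sum_congr rfl fun m' _ => ?_
    rw [← eC_mul_conj m m' y]
    ring
  have hterm_int : ∀ m m' : Fin d → ℤ, IntegrableOn
      (fun y => (a m * (starRingEnd ℂ) (a m')) * eC (m - m') y) (box d) := by
    intro m m'
    refine integrableOn_box_of_bounded
      ((continuous_const.mul (continuous_eC _)).aestronglyMeasurable) (C := ‖a m‖ * ‖a m'‖)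
      fun y => ?_
    rw [norm_mul, norm_mul, norm_eC, RCLike.norm_conj, mul_one]
  have hint : IntegrableOn (fun y => F y * (starRingEnd ℂ) (F y)) (box d) := by
    refine integrableOn_box_of_bounded
      ((hFcont.mul (RCLike.continuous_conj.comp hFcont)).aestronglyMeasurable)
      (C := (∑ m ∈ S, ‖a m‖) ^ 2) fun y => ?_
    rw [norm_mul, RCLike.norm_conj, sq]
    have : ‖F y‖ ≤ ∑ m ∈ S, ‖a m‖ := by
      refine (norm_sum_le _ _).trans (Finset.sum_le_sum fun m _ => ?_)
      rw [norm_mul, norm_eC, mul_one]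
    exact mul_le_mul this this (norm_nonneg _) (Finset.sum_nonneg fun m _ => norm_nonneg _)
  have key : ∫ y in box d, F y * (starRingEnd ℂ) (F y)
      = (((2 * π) ^ d : ℝ) : ℂ) * ∑ m ∈ S, (‖a m‖ : ℂ) ^ 2 := by
    rw [MeasureTheory.setIntegral_congr_fun (by
        exact MeasurableSet.univ_pi fun _ => measurableSet_Ioc) (fun y _ => hexp y)]
    rw [MeasureTheory.integral_finset_sum _ (fun m _ =>
      MeasureTheory.integrable_finset_sum _ (fun m' _ => hterm_int m m'))]
    have : ∀ m ∈ S, (∫ y in box d, ∑ m' ∈ S, (a m * (starRingEnd ℂ) (a m')) * eC (m - m') y)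
        = ∑ m' ∈ S, (a m * (starRingEnd ℂ) (a m')) *
            (if m - m' = 0 then ((2 * π : ℝ) : ℂ) ^ d else 0) := by
      intro m _
      rw [MeasureTheory.integral_finset_sum _ (fun m' _ => hterm_int m m')]
      refine Finset.sum_congr rfl fun m' _ => ?_
      rw [MeasureTheory.integral_const_mul, integral_box_eC]
    rw [Finset.sum_congr rfl this]
    have diag : ∀ m ∈ S, (∑ m' ∈ S, (a m * (starRingEnd ℂ) (a m')) *
        (if m - m' = 0 then ((2 * π : ℝ) : ℂ) ^ d else 0))
        = (((2 * π) ^ d : ℝ) : ℂ) * (‖a m‖ : ℂ) ^ 2 := by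
      intro m hm
      rw [Finset.sum_eq_single m]
      · rw [if_pos (sub_self m), Complex.mul_conj]
        rw [Complex.normSq_eq_norm_sq]
        push_cast
        ring
      · intro m' _ hne
        rw [if_neg (sub_ne_zero.2 (Ne.symm hne)), mul_zero]
      · intro h; exact absurd hm h
    rw [Finset.sum_congr rfl diag, ← Finset.mul_sum]
  have lhs_eq : ∫ y in box d, ‖F y‖ ^ 2 = (∫ y in box d, F y * (starRingEnd ℂ) (F y)).re := by
    rw [show (∫ y in box d, F y * (starRingEnd ℂ) (F y)).re
        = RCLike.re (∫ y in box d, F y * (starRingEnd ℂ) (F y)) from rfl, ← integral_re hint]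
    refine MeasureTheory.setIntegral_congr_fun
      (MeasurableSet.univ_pi fun _ => measurableSet_Ioc) (fun y _ => ?_)
    rw [show RCLike.re (F y * (starRingEnd ℂ) (F y)) = (F y * (starRingEnd ℂ) (F y)).re from rfl]
    rw [Complex.mul_conj, Complex.normSq_eq_norm_sq]
    simp [← Complex.ofReal_pow]
  rw [lhs_eq, key,
    show (((2 * π) ^ d : ℝ) : ℂ) * ∑ m ∈ S, (‖a m‖ : ℂ) ^ 2
        = (((2 * π) ^ d * ∑ m ∈ S, ‖a m‖ ^ 2 : ℝ) : ℂ) by push_cast; ring,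
    Complex.ofReal_re]

lemma key_exp_bound {β : ℝ} (hβ0 : 0 < β) (hβ1 : β ≤ 1) {M : ℝ}
    {a b : ℝ} (hab : |a - b| ≤ M) (n : ℤ) :
    ‖Complex.exp (I * (((n : ℝ) * a : ℝ) : ℂ)) - Complex.exp (I * (((n : ℝ) * b : ℝ) : ℂ))‖
      ≤ 2 * (|(n : ℝ)| * M) ^ β := by
  have hM : 0 ≤ M := (abs_nonneg _).trans hab
  set x := |(n : ℝ)| * M with hx
  have hx0 : 0 ≤ x := by positivity
  have h1 : ‖Complex.exp (I * (((n : ℝ) * a : ℝ) : ℂ))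
      - Complex.exp (I * (((n : ℝ) * b : ℝ) : ℂ))‖ ≤ x := by
    refine (norm_expI_sub_expI_le _ _).trans ?_
    rw [show (n : ℝ) * a - (n : ℝ) * b = (n : ℝ) * (a - b) by ring, abs_mul]
    exact mul_le_mul_of_nonneg_left hab (abs_nonneg _)
  have h2 : ‖Complex.exp (I * (((n : ℝ) * a : ℝ) : ℂ))
      - Complex.exp (I * (((n : ℝ) * b : ℝ) : ℂ))‖ ≤ 2 := by
    refine (norm_sub_le _ _).trans ?_
    have e1 : ∀ t : ℝ, ‖Complex.exp (I * (t : ℂ))‖ = 1 := fun t => by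
      rw [Complex.norm_exp]; simp
    rw [e1, e1]; norm_num
  rcases le_or_gt x 1 with h | h
  · rcases eq_or_lt_of_le hx0 with h0 | h0
    · have : ‖Complex.exp (I * (((n : ℝ) * a : ℝ) : ℂ))
          - Complex.exp (I * (((n : ℝ) * b : ℝ) : ℂ))‖ ≤ 0 := h1.trans h0.ge
      refine this.trans ?_
      positivity
    · have hxx : x ≤ x ^ β := by
        calc x = x ^ (1 : ℝ) := (Real.rpow_one x).symm
        _ ≤ x ^ β := Real.rpow_le_rpow_of_exponent_ge h0 h hβ1
      have : (0:ℝ) ≤ x ^ β := Real.rpow_nonneg hx0 _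
      linarith
  · have : (1 : ℝ) ≤ x ^ β := Real.one_le_rpow h.le hβ0.le
    linarith

lemma rpow_sq_comm {a : ℝ} (ha : 0 ≤ a) (b : ℝ) : (a ^ b) ^ (2:ℕ) = (a ^ (2:ℕ)) ^ b := by
  rw [← Real.rpow_natCast (a ^ b) 2, ← Real.rpow_mul ha, mul_comm, Real.rpow_mul ha,
    Real.rpow_natCast]

open scoped BigOperators

noncomputable def trigPoly {d : ℕ} (c : ℤ × (Fin d → ℤ) → ℂ) (x : ℝ) (y : Fin d → ℝ) : ℂ :=
  ∑ᶠ p : ℤ × (Fin d → ℤ),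
    c p * Complex.exp (Complex.I * (((p.1 : ℝ) * x + ∑ i, (p.2 i : ℝ) * y i : ℝ) : ℂ))

theorem stmt_2 (d : ℕ) (α β : ℝ) (hα : 1 / 2 < α) (hβ0 : 0 < β) (hβ : β < α - 1 / 2)
    (hβ1 : β ≤ 1) :
    ∃ C : ℝ, 0 < C ∧
      ∀ (c : ℤ × (Fin d → ℤ) → ℂ), (Function.support c).Finite →
        ∀ g f : (Fin d → ℝ) → ℝ, Measurable g → Measurable f →
          ∀ M : ℝ, (∀ y, |g y - f y| ≤ M) →
            (∫ y in Set.pi Set.univ fun _ : Fin d => Set.Ioc (-Real.pi) Real.pi,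
                ‖trigPoly c (g y) y - trigPoly c (f y) y‖ ^ 2) ≤
              C * M ^ (2 * β) * ∑ᶠ p : ℤ × (Fin d → ℤ),
                (1 + (p.1 : ℝ) ^ 2 + ∑ i, (p.2 i : ℝ) ^ 2) ^ α * ‖c p‖ ^ 2 := by
  have hK : Summable (fun n : ℤ => (1 + (n : ℝ) ^ 2) ^ (-(α - β))) :=
    summable_int_weight (by linarith)
  set K := ∑' n : ℤ, (1 + (n : ℝ) ^ 2) ^ (-(α - β)) with hKdef
  have hKpos : 0 < K := by
    refine Summable.tsum_pos hK (fun n => Real.rpow_nonneg (by positivity) _) 0 ?_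
    norm_num
  have hπ : (0 : ℝ) < 2 * π := by positivity
  have hα0 : (0 : ℝ) ≤ α := by linarith
  refine ⟨4 * K * (2 * π) ^ d, by positivity, ?_⟩
  intro c hfin g f hg hf M hM
  have hM0 : 0 ≤ M := (abs_nonneg _).trans (hM (fun _ => 0))
  set T : Finset (ℤ × (Fin d → ℤ)) := hfin.toFinset with hT
  -- the norm expression as a finite sum
  have hRHS : (∑ᶠ p : ℤ × (Fin d → ℤ), (1 + (p.1 : ℝ) ^ 2 + ∑ i, (p.2 i : ℝ) ^ 2) ^ α * ‖c p‖ ^ 2)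
      = ∑ p ∈ T, (1 + (p.1 : ℝ) ^ 2 + ∑ i, (p.2 i : ℝ) ^ 2) ^ α * ‖c p‖ ^ 2 := by
    refine finsum_eq_sum_of_support_subset _ ?_
    intro p hp
    rw [hT, Set.Finite.coe_toFinset]
    rcases eq_or_ne (c p) 0 with h | h
    · exfalso; apply hp; simp [h]
    · exact h
  -- trigPoly as finite sum, with the exponential split
  have htrig : ∀ x y, trigPoly c x y
      = ∑ p ∈ T, c p * (Complex.exp (I * (((p.1 : ℝ) * x : ℝ) : ℂ)) * eC p.2 y) := by
    intro x y
    rw [trigPoly]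
    rw [finsum_eq_sum_of_support_subset _ (s := T) (by
      rw [hT, Set.Finite.coe_toFinset]
      exact Function.support_mul_subset_left _ _)]
    refine Finset.sum_congr rfl fun p _ => ?_
    rw [eC, ← Complex.exp_add, ← mul_add, ← Complex.ofReal_add]
  set N : Finset ℤ := T.image Prod.fst with hN
  set fib : ℤ → Finset (ℤ × (Fin d → ℤ)) := fun n => T.filter (fun p => p.1 = n) with hfib
  set ψ : ℤ → (Fin d → ℝ) → ℂ := fun n y => ∑ p ∈ fib n, c p * eC p.2 y with hψ
  set Δ : ℤ → ℝ → ℂ :=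
    fun n t => Complex.exp (I * (((n : ℝ) * t : ℝ) : ℂ)) with hΔ
  have hdiff : ∀ y, trigPoly c (g y) y - trigPoly c (f y) y
      = ∑ n ∈ N, (Δ n (g y) - Δ n (f y)) * ψ n y := by
    intro y
    rw [htrig, htrig, ← Finset.sum_sub_distrib]
    rw [← Finset.sum_fiberwise_of_maps_to (g := Prod.fst)
      (fun p hp => Finset.mem_image_of_mem Prod.fst hp)
      (fun p => c p * (Complex.exp (I * (((p.1 : ℝ) * g y : ℝ) : ℂ)) * eC p.2 y)
        - c p * (Complex.exp (I * (((p.1 : ℝ) * f y : ℝ) : ℂ)) * eC p.2 y))]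
    refine Finset.sum_congr rfl fun n hn => ?_
    rw [hψ, Finset.mul_sum]
    refine Finset.sum_congr rfl fun p hp => ?_
    have hp1 : p.1 = n := by
      simpa using (Finset.mem_filter.1 hp).2
    rw [hΔ, ← hp1]
    ring
  -- pointwise bound
  set q : ℤ → ℝ := fun n => (1 + (n : ℝ) ^ 2) ^ α with hq
  have hqpos : ∀ n, 0 < q n := fun n => Real.rpow_pos_of_pos (by positivity) _
  set G : (Fin d → ℝ) → ℝ := fun y => ∑ n ∈ N, q n * ‖ψ n y‖ ^ 2 with hG
  have hGnn : ∀ y, 0 ≤ G y := fun y =>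
    Finset.sum_nonneg fun n _ => mul_nonneg (hqpos n).le (by positivity)
  have hpt : ∀ y, ‖trigPoly c (g y) y - trigPoly c (f y) y‖ ^ 2
      ≤ (4 * M ^ (2 * β) * K) * G y := by
    intro y
    have h1 : ‖trigPoly c (g y) y - trigPoly c (f y) y‖
        ≤ ∑ n ∈ N, (2 * (|(n : ℝ)| * M) ^ β) * ‖ψ n y‖ := by
      rw [hdiff y]
      refine (norm_sum_le _ _).trans (Finset.sum_le_sum fun n _ => ?_)
      rw [norm_mul]
      exact mul_le_mul_of_nonneg_right (key_exp_bound hβ0 hβ1 (hM y) n) (norm_nonneg _)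
    have hCS := Finset.sum_mul_sq_le_sq_mul_sq N
      (fun n => (2 * (|(n : ℝ)| * M) ^ β) * Real.sqrt (q n)⁻¹)
      (fun n => Real.sqrt (q n) * ‖ψ n y‖)
    have hfg : ∀ n ∈ N, ((2 * (|(n : ℝ)| * M) ^ β) * Real.sqrt (q n)⁻¹)
        * (Real.sqrt (q n) * ‖ψ n y‖) = (2 * (|(n : ℝ)| * M) ^ β) * ‖ψ n y‖ := by
      intro n _
      rw [show ((2 * (|(n : ℝ)| * M) ^ β) * Real.sqrt (q n)⁻¹) * (Real.sqrt (q n) * ‖ψ n y‖)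
        = (2 * (|(n : ℝ)| * M) ^ β) * (Real.sqrt (q n)⁻¹ * Real.sqrt (q n)) * ‖ψ n y‖ by ring]
      rw [Real.sqrt_inv, inv_mul_cancel₀ (Real.sqrt_ne_zero'.2 (hqpos n))]
      ring
    rw [Finset.sum_congr rfl hfg] at hCS
    have hA : ∑ n ∈ N, ((2 * (|(n : ℝ)| * M) ^ β) * Real.sqrt (q n)⁻¹) ^ 2
        ≤ 4 * M ^ (2 * β) * K := by
      have hterm : ∀ n ∈ N, ((2 * (|(n : ℝ)| * M) ^ β) * Real.sqrt (q n)⁻¹) ^ 2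
          ≤ 4 * M ^ (2 * β) * (1 + (n : ℝ) ^ 2) ^ (-(α - β)) := by
        intro n _
        rw [mul_pow, Real.sq_sqrt (inv_nonneg.2 (hqpos n).le)]
        have hsq : (2 * (|(n : ℝ)| * M) ^ β) ^ 2
            = 4 * (((n : ℝ) ^ 2) ^ β * M ^ (2 * β)) := by
          rw [mul_pow, rpow_sq_comm (by positivity) β, mul_pow, _root_.sq_abs,
            Real.mul_rpow (by positivity) (by positivity), ← Real.rpow_natCast M 2,
            ← Real.rpow_mul hM0]
          norm_num
        rw [hsq]
        have hle : ((n : ℝ) ^ 2) ^ β ≤ (1 + (n : ℝ) ^ 2) ^ β :=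
          Real.rpow_le_rpow (by positivity) (by linarith) hβ0.le
        have hqinv : (q n)⁻¹ = (1 + (n : ℝ) ^ 2) ^ (-α) := by
          rw [hq, ← Real.rpow_neg (by positivity)]
        rw [hqinv]
        have hMb : (0:ℝ) ≤ M ^ (2 * β) := Real.rpow_nonneg hM0 _
        have hqa : (0:ℝ) ≤ (1 + (n : ℝ) ^ 2) ^ (-α) := Real.rpow_nonneg (by positivity) _
        calc 4 * (((n : ℝ) ^ 2) ^ β * M ^ (2 * β)) * (1 + (n : ℝ) ^ 2) ^ (-α)
            ≤ 4 * ((1 + (n : ℝ) ^ 2) ^ β * M ^ (2 * β)) * (1 + (n : ℝ) ^ 2) ^ (-α) := by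
              have := mul_le_mul_of_nonneg_right (mul_le_mul_of_nonneg_right hle hMb) hqa
              nlinarith [this]
          _ = 4 * M ^ (2 * β) * ((1 + (n : ℝ) ^ 2) ^ β * (1 + (n : ℝ) ^ 2) ^ (-α)) := by ring
          _ = 4 * M ^ (2 * β) * (1 + (n : ℝ) ^ 2) ^ (-(α - β)) := by
              rw [← Real.rpow_add (by positivity)]
              ring_nf
      refine (Finset.sum_le_sum hterm).trans ?_
      rw [← Finset.mul_sum]
      refine mul_le_mul_of_nonneg_left ?_ (by positivity)
      exact Summable.sum_le_tsum N (fun n _ => Real.rpow_nonneg (by positivity) _) hK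
    have hg2 : ∀ n ∈ N, (Real.sqrt (q n) * ‖ψ n y‖) ^ 2 = q n * ‖ψ n y‖ ^ 2 := by
      intro n _
      rw [mul_pow, Real.sq_sqrt (hqpos n).le]
    rw [Finset.sum_congr rfl hg2] at hCS
    calc ‖trigPoly c (g y) y - trigPoly c (f y) y‖ ^ 2
        ≤ (∑ n ∈ N, (2 * (|(n : ℝ)| * M) ^ β) * ‖ψ n y‖) ^ 2 := by
          have hnn : (0:ℝ) ≤ ∑ n ∈ N, (2 * (|(n : ℝ)| * M) ^ β) * ‖ψ n y‖ :=
            (norm_nonneg _).trans h1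
          exact pow_le_pow_left₀ (norm_nonneg _) h1 2
      _ ≤ (∑ n ∈ N, ((2 * (|(n : ℝ)| * M) ^ β) * Real.sqrt (q n)⁻¹) ^ 2)
          * ∑ n ∈ N, q n * ‖ψ n y‖ ^ 2 := hCS
      _ ≤ (4 * M ^ (2 * β) * K) * G y := by
          exact mul_le_mul_of_nonneg_right hA (hGnn y)
  -- integration stage
  have hψcont : ∀ n, Continuous (ψ n) := fun n =>
    continuous_finset_sum _ fun p _ => continuous_const.mul (continuous_eC p.2)
  set B : ℤ → ℝ := fun n => ∑ p ∈ fib n, ‖c p‖ with hB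
  have hBnn : ∀ n, 0 ≤ B n := fun n => Finset.sum_nonneg fun p _ => norm_nonneg _
  have hψle : ∀ n y, ‖ψ n y‖ ≤ B n := by
    intro n y
    rw [hψ, hB]
    refine (norm_sum_le _ _).trans (Finset.sum_le_sum fun p _ => ?_)
    rw [norm_mul, norm_eC, mul_one]
  have hGcont : Continuous G := by
    apply continuous_finset_sum
    intro n _
    exact continuous_const.mul ((hψcont n).norm.pow 2)
  have hGbdd : ∀ y, ‖G y‖ ≤ ∑ n ∈ N, q n * B n ^ 2 := by
    intro y
    rw [Real.norm_eq_abs, _root_.abs_of_nonneg (hGnn y)]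
    refine Finset.sum_le_sum fun n _ => ?_
    exact mul_le_mul_of_nonneg_left
      (pow_le_pow_left₀ (norm_nonneg _) (hψle n y) 2) (hqpos n).le
  have hGint : IntegrableOn G (box d) :=
    integrableOn_box_of_bounded hGcont.aestronglyMeasurable hGbdd
  have hΔmeas : ∀ n : ℤ, Measurable fun y => Δ n (g y) - Δ n (f y) := by
    intro n
    have h1 : ∀ (u : (Fin d → ℝ) → ℝ), Measurable u →
        Measurable fun y => Complex.exp (I * (((n : ℝ) * u y : ℝ) : ℂ)) := by
      intro u hu
      exact Complex.measurable_exp.comp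
        ((Complex.measurable_ofReal.comp (hu.const_mul ((n : ℝ)))).const_mul I)
    exact (h1 g hg).sub (h1 f hf)
  have hdiffmeas : Measurable fun y => ‖trigPoly c (g y) y - trigPoly c (f y) y‖ ^ 2 := by
    have h0 : (fun y => trigPoly c (g y) y - trigPoly c (f y) y)
        = fun y => ∑ n ∈ N, (Δ n (g y) - Δ n (f y)) * ψ n y := funext hdiff
    have h1 : Measurable fun y => trigPoly c (g y) y - trigPoly c (f y) y := by
      rw [h0]
      exact Finset.measurable_sum N fun n _ => (hΔmeas n).mul (hψcont n).measurable
    exact h1.norm.pow_const 2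
  have hLbdd : ∀ y, ‖(‖trigPoly c (g y) y - trigPoly c (f y) y‖ ^ 2 : ℝ)‖
      ≤ (∑ n ∈ N, 2 * B n) ^ 2 := by
    intro y
    rw [Real.norm_eq_abs, _root_.abs_of_nonneg (by positivity)]
    have h1 : ‖trigPoly c (g y) y - trigPoly c (f y) y‖ ≤ ∑ n ∈ N, 2 * B n := by
      rw [hdiff y]
      refine (norm_sum_le _ _).trans (Finset.sum_le_sum fun n _ => ?_)
      rw [norm_mul]
      have hΔ2 : ‖Δ n (g y) - Δ n (f y)‖ ≤ 2 := by
        refine (norm_sub_le _ _).trans ?_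
        have e1 : ∀ t : ℝ, ‖Δ n t‖ = 1 := fun t => by
          rw [hΔ]; simp only [Complex.norm_exp]; simp
        rw [e1, e1]; norm_num
      exact mul_le_mul hΔ2 (hψle n y) (norm_nonneg _) (by norm_num)
    exact pow_le_pow_left₀ (norm_nonneg _) h1 2
  have hLint : IntegrableOn (fun y => ‖trigPoly c (g y) y - trigPoly c (f y) y‖ ^ 2) (box d) :=
    integrableOn_box_of_bounded hdiffmeas.aestronglyMeasurable hLbdd
  have haux : ∀ n : ℤ, IntegrableOn (fun y => q n * ‖ψ n y‖ ^ 2) (box d) := by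
    intro n
    refine integrableOn_box_of_bounded
      ((continuous_const.mul ((hψcont n).norm.pow 2)).aestronglyMeasurable)
      (C := q n * B n ^ 2) fun y => ?_
    rw [Real.norm_eq_abs, _root_.abs_of_nonneg (mul_nonneg (hqpos n).le (by positivity))]
    exact mul_le_mul_of_nonneg_left
      (pow_le_pow_left₀ (norm_nonneg _) (hψle n y) 2) (hqpos n).le
  have hfactor : (0:ℝ) ≤ 4 * M ^ (2 * β) * K :=
    mul_nonneg (mul_nonneg (by norm_num) (Real.rpow_nonneg hM0 _)) hKpos.le
  have hinj : ∀ n : ℤ, ∀ p ∈ fib n, ∀ r ∈ fib n, p.2 = r.2 → p = r := by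
    intro n p hp r hr hpr
    have hp1 : p.1 = n := by simpa using (Finset.mem_filter.1 hp).2
    have hr1 : r.1 = n := by simpa using (Finset.mem_filter.1 hr).2
    exact Prod.ext (by rw [hp1, hr1]) hpr
  have hmkmem : ∀ n : ℤ, ∀ p ∈ fib n, ((n : ℤ), p.2) = p := by
    intro n p hp
    have hp1 : p.1 = n := by simpa using (Finset.mem_filter.1 hp).2
    exact Prod.ext hp1.symm rfl
  have hpars : ∀ n : ℤ, (∫ y in box d, ‖ψ n y‖ ^ 2)
      = (2 * π) ^ d * ∑ p ∈ fib n, ‖c p‖ ^ 2 := by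
    intro n
    have himg : ∀ y, ψ n y = ∑ m ∈ (fib n).image Prod.snd, c (n, m) * eC m y := by
      intro y
      rw [hψ, Finset.sum_image (hinj n)]
      refine Finset.sum_congr rfl fun p hp => ?_
      rw [hmkmem n p hp]
    calc (∫ y in box d, ‖ψ n y‖ ^ 2)
        = ∫ y in box d, ‖∑ m ∈ (fib n).image Prod.snd, c (n, m) * eC m y‖ ^ 2 := by
          refine setIntegral_congr_fun (MeasurableSet.univ_pi fun _ => measurableSet_Ioc)
            (fun y _ => ?_)
          rw [himg y]
      _ = (2 * π) ^ d * ∑ m ∈ (fib n).image Prod.snd, ‖c (n, m)‖ ^ 2 :=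
          parseval _ (fun m => c (n, m))
      _ = (2 * π) ^ d * ∑ p ∈ fib n, ‖c p‖ ^ 2 := by
          rw [Finset.sum_image (hinj n)]
          refine congrArg _ (Finset.sum_congr rfl fun p hp => ?_)
          rw [hmkmem n p hp]
  rw [hRHS]
  have hbox : (Set.pi Set.univ fun _ : Fin d => Set.Ioc (-Real.pi) Real.pi) = box d := rfl
  rw [hbox]
  calc (∫ y in box d, ‖trigPoly c (g y) y - trigPoly c (f y) y‖ ^ 2)
      ≤ ∫ y in box d, (4 * M ^ (2 * β) * K) * G y :=
        integral_mono hLint (hGint.const_mul _) fun y => hpt y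
    _ = (4 * M ^ (2 * β) * K) * ∫ y in box d, G y := integral_const_mul _ _
    _ = (4 * M ^ (2 * β) * K) * ∑ n ∈ N, q n * ∫ y in box d, ‖ψ n y‖ ^ 2 := by
        congr 1
        rw [hG]
        rw [integral_finset_sum _ (fun n _ => haux n)]
        exact Finset.sum_congr rfl fun n _ => integral_const_mul _ _
    _ = (4 * M ^ (2 * β) * K) * ∑ n ∈ N, q n * ((2 * π) ^ d * ∑ p ∈ fib n, ‖c p‖ ^ 2) := by
        congr 1
        exact Finset.sum_congr rfl fun n _ => by rw [hpars n]
    _ ≤ (4 * M ^ (2 * β) * K) * ∑ n ∈ N, (2 * π) ^ d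
          * ∑ p ∈ fib n, (1 + (p.1 : ℝ) ^ 2 + ∑ i, (p.2 i : ℝ) ^ 2) ^ α * ‖c p‖ ^ 2 := by
        refine mul_le_mul_of_nonneg_left (Finset.sum_le_sum fun n _ => ?_) hfactor
        have hterm : ∀ p ∈ fib n, q n * ‖c p‖ ^ 2
            ≤ (1 + (p.1 : ℝ) ^ 2 + ∑ i, (p.2 i : ℝ) ^ 2) ^ α * ‖c p‖ ^ 2 := by
          intro p hp
          have hp1 : p.1 = n := by simpa using (Finset.mem_filter.1 hp).2
          refine mul_le_mul_of_nonneg_right ?_ (by positivity)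
          rw [hq, ← hp1]
          refine Real.rpow_le_rpow (by positivity) ?_ hα0
          have : (0:ℝ) ≤ ∑ i, (p.2 i : ℝ) ^ 2 := Finset.sum_nonneg fun i _ => sq_nonneg _
          linarith
        calc q n * ((2 * π) ^ d * ∑ p ∈ fib n, ‖c p‖ ^ 2)
            = (2 * π) ^ d * ∑ p ∈ fib n, q n * ‖c p‖ ^ 2 := by
              simp only [Finset.mul_sum]
              exact Finset.sum_congr rfl fun p _ => by ring
          _ ≤ (2 * π) ^ d * ∑ p ∈ fib n, (1 + (p.1 : ℝ) ^ 2
                + ∑ i, (p.2 i : ℝ) ^ 2) ^ α * ‖c p‖ ^ 2 :=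
              mul_le_mul_of_nonneg_left (Finset.sum_le_sum hterm) (by positivity)
    _ = 4 * K * (2 * π) ^ d * M ^ (2 * β)
          * ∑ p ∈ T, (1 + (p.1 : ℝ) ^ 2 + ∑ i, (p.2 i : ℝ) ^ 2) ^ α * ‖c p‖ ^ 2 := by
        rw [← Finset.mul_sum,
          Finset.sum_fiberwise_of_maps_to (fun p hp => Finset.mem_image_of_mem Prod.fst hp)]
        ring
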